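/- arXiv:2201.06840 — 3 statements merged into one kernel-verified Lean document; each statement's English description precedes it below -/
import Mathlib

section
/- Let A be a finite-dimensional non-commutative C*-algebra with a faithful tracial state τ. Then there exist unitaries u, v ∈ A such that |τ((u*v*uv)^k)| < 1 for every nonzero integer k. -/
noncomputable section

namespace ExistsUnitariesAux


open Polynomial in
lemma spectrum_real_finite {A : Type*} [CStarAlgebra A] [FiniteDimensional ℂ A] [Nontrivial A]
    (a : A) : (spectrum ℝ a).Finite := by
  have hint : IsIntegral ℂ a := (Algebra.IsIntegral.of_finite ℂ A).isIntegral a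
  have hp : minpoly ℂ a ≠ 0 := minpoly.ne_zero hint
  have hsub : spectrum ℂ a ⊆ {x | (minpoly ℂ a).IsRoot x} := by
    intro x hx
    have h1 := spectrum.subset_polynomial_aeval a (minpoly ℂ a) ⟨x, hx, rfl⟩
    rw [minpoly.aeval, spectrum.zero_eq] at h1
    simpa using h1
  have hfin : (spectrum ℂ a).Finite :=
    (Polynomial.finite_setOf_isRoot hp).subset hsub
  rw [← spectrum.preimage_algebraMap ℂ]
  exact hfin.preimage (fun x _ y _ h => by exact_mod_cast h)


lemma exists_selfAdjoint_not_commute {A : Type*} [CStarAlgebra A]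
    (hnc : ∃ a b : A, a * b ≠ b * a) :
    ∃ h x : A, IsSelfAdjoint h ∧ h * x ≠ x * h := by
  obtain ⟨a, b, hab⟩ := hnc
  by_contra hcon
  push_neg at hcon
  have h1 : IsSelfAdjoint (a + star a) := by
    simp [IsSelfAdjoint, star_add, add_comm]
  have h2 : IsSelfAdjoint (Complex.I • (a - star a)) := by
    simp only [IsSelfAdjoint, star_smul, star_sub, star_star, Complex.star_def, Complex.conj_I,
      neg_smul, smul_sub, neg_sub]
    abel
  have e1 := hcon _ b h1
  have e2 := hcon _ b h2
  rw [smul_mul_assoc, mul_smul_comm] at e2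
  have e2' : (a - star a) * b = b * (a - star a) :=
    smul_right_injective A Complex.I_ne_zero e2
  apply hab
  have key : (2 : ℂ) • (a * b) = (2 : ℂ) • (b * a) := by
    have : (a + star a) * b + (a - star a) * b = b * (a + star a) + b * (a - star a) := by
      rw [e1, e2']
    have h2ab : (2 : ℂ) • (a * b) = (a + star a) * b + (a - star a) * b := by
      rw [add_mul, sub_mul]; module
    have h2ba : (2 : ℂ) • (b * a) = b * (a + star a) + b * (a - star a) := by
      rw [mul_add, mul_sub]; module
    rw [h2ab, h2ba, this]
  exact smul_right_injective A two_ne_zero key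

lemma exists_proj_not_commute {A : Type*} [CStarAlgebra A] [FiniteDimensional ℂ A] [Nontrivial A]
    (h x : A) (hsa : IsSelfAdjoint h) (hcomm : h * x ≠ x * h) :
    ∃ p y : A, p * p = p ∧ IsSelfAdjoint p ∧ p * y ≠ y * p := by
  classical
  have hfin := spectrum_real_finite h
  by_contra hcon
  push_neg at hcon
  apply hcomm
  set σ := hfin.toFinset with hσ
  set χ : ℝ → ℝ → ℝ := fun lam t => if t = lam then 1 else 0 with hχ
  have hcont : ∀ f : ℝ → ℝ, ContinuousOn f (spectrum ℝ h) := fun f => hfin.continuousOn f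
  have hproj : ∀ lam : ℝ, cfc (χ lam) h * cfc (χ lam) h = cfc (χ lam) h := by
    intro lam
    rw [← cfc_mul _ _ h (hcont _) (hcont _)]
    congr 1
    funext t
    by_cases ht : t = lam <;> simp [hχ, ht]
  have hprojsa : ∀ lam : ℝ, IsSelfAdjoint (cfc (χ lam) h) := fun lam => cfc_predicate _ h
  have hsum : h = ∑ lam ∈ σ, lam • cfc (χ lam) h := by
    conv_lhs => rw [← cfc_id ℝ h hsa]
    have h1 : cfc (id : ℝ → ℝ) h = cfc (fun t => ∑ lam ∈ σ, lam * χ lam t) h := by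
      apply cfc_congr
      intro t ht
      have htσ : t ∈ σ := by simpa [hσ] using ht
      simp only [id]
      rw [Finset.sum_eq_single t]
      · simp [hχ]
      · intro b _ hbt; simp [hχ, Ne.symm hbt]
      · intro hnot; exact absurd htσ hnot
    rw [h1]
    have h2 : (fun t => ∑ lam ∈ σ, lam * χ lam t) = ∑ lam ∈ σ, (fun t => lam * χ lam t) := by
      funext t; simp
    rw [h2, cfc_sum _ h σ (fun i _ => hcont _)]
    exact Finset.sum_congr rfl fun lam _ => cfc_const_mul lam (χ lam) h (hcont _)
  calc h * x = (∑ lam ∈ σ, lam • cfc (χ lam) h) * x := by rw [← hsum]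
    _ = ∑ lam ∈ σ, lam • (cfc (χ lam) h * x) := by
        rw [Finset.sum_mul]; exact Finset.sum_congr rfl fun lam _ => smul_mul_assoc _ _ _
    _ = ∑ lam ∈ σ, lam • (x * cfc (χ lam) h) := by
        exact Finset.sum_congr rfl fun lam _ => by
          rw [hcon (cfc (χ lam) h) x (hproj lam) (hprojsa lam)]
    _ = x * ∑ lam ∈ σ, lam • cfc (χ lam) h := by
        rw [Finset.mul_sum]; exact Finset.sum_congr rfl fun lam _ => (mul_smul_comm _ _ _).symm
    _ = x * h := by rw [← hsum]

lemma exists_partial_isometry {A : Type*} [CStarAlgebra A] [FiniteDimensional ℂ A] [Nontrivial A]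
    (q y : A) (hqq : q * q = q) (hqsa : IsSelfAdjoint q)
    (hyne : y ≠ 0) (hqy : q * y = y) (hyq : y * (1 - q) = y) :
    ∃ s : A, s ≠ 0 ∧ s * star s * s = s ∧ (s * star s) * (star s * s) = 0 := by
  classical
  set h : A := y * star y with hh_def
  have hh : IsSelfAdjoint h := by simp [hh_def, IsSelfAdjoint, star_mul]
  have hne : h ≠ 0 := by
    intro h0
    apply hyne
    have h1 : star (star y) * star y = 0 := by rwa [star_star]
    rw [CStarRing.star_mul_self_eq_zero_iff] at h1
    simpa using congrArg star h1
  have hfin := spectrum_real_finite h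
  have hcont : ∀ f : ℝ → ℝ, ContinuousOn f (spectrum ℝ h) := fun f => hfin.continuousOn f
  have hspec_nonneg : ∀ t ∈ spectrum ℝ h, 0 ≤ t := by
    have := spectrum_star_mul_self_nonneg (b := star y)
    rwa [star_star] at this
  set g : ℝ → ℝ := fun t => if t = 0 then 0 else (Real.sqrt t)⁻¹ with hg_def
  set e₀ : ℝ → ℝ := fun t => if t = 0 then 0 else 1 with he_def
  set s : A := cfc g h * y with hs_def
  have hgsa : IsSelfAdjoint (cfc g h) := cfc_predicate g h
  have hstars : star s = star y * cfc g h := by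
    rw [hs_def, star_mul, hgsa.star_eq]
  set E : A := cfc e₀ h with hE_def
  -- s * star s = E
  have hP : s * star s = E := by
    have h1 : s * star s = cfc g h * h * cfc g h := by
      rw [hs_def, hstars, hh_def]; noncomm_ring
    have h2 : cfc g h * h * cfc g h = E :=
      calc cfc g h * h * cfc g h
          = cfc g h * cfc (fun t : ℝ => t) h * cfc g h := by rw [cfc_id' ℝ h hh]
        _ = cfc (fun t => g t * t) h * cfc g h := by
            rw [cfc_mul g (fun t : ℝ => t) h (hcont _) (hcont _)]
        _ = cfc (fun t => g t * t * g t) h := by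
            rw [cfc_mul (fun t => g t * t) g h (hcont _) (hcont _)]
        _ = E := by
            rw [hE_def]
            apply cfc_congr
            intro t ht
            by_cases h0 : t = 0
            · simp [hg_def, he_def, h0]
            · have htpos : 0 < t := (hspec_nonneg t ht).lt_of_ne (Ne.symm h0)
              have hsq : Real.sqrt t ≠ 0 := by positivity
              simp only [hg_def, he_def, if_neg h0]
              field_simp
              rw [Real.sq_sqrt htpos.le]
    rw [h1, h2]
  have hEh : E * h = h :=
    calc E * h = cfc e₀ h * cfc (fun t : ℝ => t) h := by rw [cfc_id' ℝ h hh, hE_def]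
      _ = cfc (fun t => e₀ t * t) h := (cfc_mul _ _ h (hcont _) (hcont _)).symm
      _ = cfc (fun t : ℝ => t) h :=
          cfc_congr (fun t _ => by by_cases h0 : t = 0 <;> simp [he_def, h0])
      _ = h := cfc_id' ℝ h hh
  have hEne : E ≠ 0 := fun hE0 => hne (by rw [← hEh, hE0, zero_mul])
  have hsne : s ≠ 0 := by
    intro hs0
    exact hEne (by rw [← hP, hs0, zero_mul])
  -- partial isometry
  have hEg : E * cfc g h = cfc g h :=
    calc E * cfc g h = cfc (fun t => e₀ t * g t) h := by
          rw [cfc_mul e₀ g h (hcont _) (hcont _), hE_def]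
      _ = cfc g h :=
          cfc_congr (fun t _ => by by_cases h0 : t = 0 <;> simp [he_def, hg_def, h0])
  have hpi : s * star s * s = s := by
    rw [hP, hs_def, ← mul_assoc, hEg]
  -- orthogonality
  set G : A := cfc (fun t => g t * g t) h with hG_def
  have hEG : E = G * h := by
    rw [hE_def]
    calc cfc e₀ h = cfc (fun t => g t * g t * t) h := by
          apply cfc_congr
          intro t ht
          by_cases h0 : t = 0
          · simp [he_def, hg_def, h0]
          · have htpos : 0 < t := (hspec_nonneg t ht).lt_of_ne (Ne.symm h0)
            have hsq : Real.sqrt t ≠ 0 := by positivity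
            simp only [hg_def, he_def, if_neg h0]
            field_simp
            rw [Real.sq_sqrt htpos.le]
      _ = cfc (fun t => g t * g t) h * cfc (fun t : ℝ => t) h :=
          cfc_mul _ _ h (hcont _) (hcont _)
      _ = G * h := by rw [cfc_id' ℝ h hh, hG_def]
  have hsyq : star y * q = star y := by
    have h1 := congrArg star hqy
    rw [star_mul, hqsa.star_eq] at h1
    exact h1
  have hhq : h * q = h := by
    rw [hh_def, mul_assoc, hsyq]
  have hEq : E * q = E := by rw [hEG, mul_assoc, hhq]
  have hQ : star s * s = star y * G * y := by
    have hgg : cfc (fun t => g t * g t) h = cfc g h * cfc g h :=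
      cfc_mul g g h (hcont _) (hcont _)
    rw [hstars, hs_def, hG_def, hgg]
    noncomm_ring
  have hQsa : IsSelfAdjoint (star s * s) := by
    simp [IsSelfAdjoint, star_mul, mul_assoc]
  have hQr : star s * s * (1 - q) = star s * s := by
    rw [hQ, mul_assoc, hyq]
  have hrQ : (1 - q) * (star s * s) = star s * s := by
    have h1 := congrArg star hQr
    rwa [star_mul, hQsa.star_eq, star_sub, star_one, hqsa.star_eq] at h1
  have horth : (s * star s) * (star s * s) = 0 := by
    rw [hP]
    conv_lhs => rw [← hrQ, ← hEq]
    have h5 : E * q * ((1 - q) * (star s * s)) = E * (q * (1 - q)) * (star s * s) := by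
      noncomm_ring
    have hq0 : q * (1 - q) = 0 := by rw [mul_sub, mul_one, hqq, sub_self]
    rw [h5, hq0, mul_zero, zero_mul]
  exact ⟨s, hsne, hpi, horth⟩

lemma exists_corner {A : Type*} [CStarAlgebra A] [FiniteDimensional ℂ A] [Nontrivial A]
    (hnc : ∃ a b : A, a * b ≠ b * a) :
    ∃ q y : A, q * q = q ∧ IsSelfAdjoint q ∧ y ≠ 0 ∧ q * y = y ∧ y * (1 - q) = y := by
  obtain ⟨h0, x0, hsa0, hcomm0⟩ := exists_selfAdjoint_not_commute hnc
  obtain ⟨p, x, hpp, hpsa, hpx⟩ := exists_proj_not_commute h0 x0 hsa0 hcomm0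
  have hqq : (1 - p) * (1 - p) = 1 - p := by
    have h1 : (1 - p) * (1 - p) = 1 - p - p + p * p := by noncomm_ring
    rw [h1, hpp]; abel
  have hqsa : IsSelfAdjoint (1 - p) := by
    simp [IsSelfAdjoint, star_sub, hpsa.star_eq]
  by_cases hcase : p * x * (1 - p) = 0
  · have hne : (1 - p) * x * p ≠ 0 := by
      intro h0'
      apply hpx
      have e1 : p * x - p * x * p = 0 := by
        have : p * x * (1 - p) = p * x - p * x * p := by noncomm_ring
        rw [← this, hcase]
      have e2 : x * p - p * x * p = 0 := by
        have : (1 - p) * x * p = x * p - p * x * p := by noncomm_ring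
        rw [← this, h0']
      have e1' := sub_eq_zero.mp e1
      have e2' := sub_eq_zero.mp e2
      rw [e1', e2']
    refine ⟨1 - p, (1 - p) * x * p, hqq, hqsa, hne, ?_, ?_⟩
    · rw [← mul_assoc, ← mul_assoc, hqq]
    · rw [sub_sub_cancel, mul_assoc, hpp]
  · refine ⟨p, p * x * (1 - p), hpp, hpsa, hcase, ?_, ?_⟩
    · rw [← mul_assoc, ← mul_assoc, hpp]
    · rw [mul_assoc, hqq]


end ExistsUnitariesAux

set_option maxHeartbeats 1000000 in
/-- A finite-dimensional non-commutative C*-algebra with a faithful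
tracial state `τ` contains unitaries `u, v` such that `|τ((u*v*uv)^k)| < 1` for every
nonzero integer `k`.  (In the unitary group, `u⁻¹ = u*`, so the element below is
`u*v*uv`.) -/
theorem exists_unitaries_trace_commutator_lt_one
    (A : Type*) [NormedRing A] [StarRing A] [CStarRing A] [NormedAlgebra ℂ A]
    [StarModule ℂ A] [CompleteSpace A] [FiniteDimensional ℂ A]
    (hnc : ∃ a b : A, a * b ≠ b * a)
    (τ : A →ₗ[ℂ] ℂ)
    (hτ1 : τ 1 = 1)
    (htrace : ∀ a b : A, τ (a * b) = τ (b * a))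
    (hpos : ∀ a : A, 0 ≤ (τ (star a * a)).re ∧ (τ (star a * a)).im = 0)
    (hfaithful : ∀ a : A, τ (star a * a) = 0 → a = 0) :
    ∃ u v : unitary A, ∀ k : ℤ, k ≠ 0 →
      ‖τ (((u⁻¹ * v⁻¹ * u * v) ^ k : unitary A) : A)‖ < 1 := by
  letI : CStarAlgebra A := {}
  have : Nontrivial A := by
    obtain ⟨a, b, hab⟩ := hnc
    exact nontrivial_of_ne _ _ hab
  obtain ⟨q0, y0, hq0, hq0sa, hy0ne, hq0y, hy0q⟩ := ExistsUnitariesAux.exists_corner hnc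
  obtain ⟨s, hsne, hpi, horth⟩ :=
    ExistsUnitariesAux.exists_partial_isometry q0 y0 hq0 hq0sa hy0ne hq0y hy0q
  set P : A := s * star s with hPdef
  set Q : A := star s * s with hQdef
  set R : A := 1 - P - Q with hRdef
  have hPsa : IsSelfAdjoint P := by simp [hPdef, IsSelfAdjoint, star_mul]
  have hQsa : IsSelfAdjoint Q := by simp [hQdef, IsSelfAdjoint, star_mul, mul_assoc]
  have hRsa : IsSelfAdjoint R := by
    simp only [hRdef, IsSelfAdjoint, star_sub, star_one, hPsa.star_eq, hQsa.star_eq]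
  have hPQ : P * Q = 0 := horth
  have hQP : Q * P = 0 := by
    have h1 := congrArg star hPQ
    rwa [star_mul, hPsa.star_eq, hQsa.star_eq, star_zero] at h1
  have hPs : P * s = s := hpi
  have hsQ : s * Q = s := by rw [hQdef, ← mul_assoc]; exact hpi
  have hss : s * s = 0 := by
    calc s * s = s * Q * (P * s) := by rw [hsQ, hPs]
      _ = s * (Q * P) * s := by noncomm_ring
      _ = 0 := by rw [hQP, mul_zero, zero_mul]
  have hsP : s * P = 0 := by
    calc s * P = s * s * star s := by rw [hPdef, mul_assoc]
      _ = 0 := by rw [hss, zero_mul]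
  have hQs : Q * s = 0 := by
    calc Q * s = star s * (s * s) := by rw [hQdef, mul_assoc]
      _ = 0 := by rw [hss, mul_zero]
  have hstP : star s * P = star s := by
    have h1 := congrArg star hPs
    rwa [star_mul, hPsa.star_eq] at h1
  have hPst : P * star s = 0 := by
    have h1 := congrArg star hsP
    rwa [star_mul, hPsa.star_eq, star_zero] at h1
  have hQst : Q * star s = star s := by
    have h1 := congrArg star hsQ
    rwa [star_mul, hQsa.star_eq] at h1
  have hstQ : star s * Q = 0 := by
    have h1 := congrArg star hQs
    rwa [star_mul, hQsa.star_eq, star_zero] at h1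
  have hstst : star s * star s = 0 := by
    have h1 := congrArg star hss
    rwa [star_mul, star_zero] at h1
  have hPP : P * P = P := by
    calc P * P = s * star s * s * star s := by rw [hPdef]; noncomm_ring
      _ = P := by rw [hpi, hPdef]
  have hQQ : Q * Q = Q := by
    calc Q * Q = star s * (s * star s * s) := by rw [hQdef]; noncomm_ring
      _ = Q := by rw [hpi, hQdef]
  -- R table
  have hsR : s * R = 0 := by rw [hRdef, mul_sub, mul_sub, mul_one, hsP, hsQ]; abel
  have hRs : R * s = 0 := by rw [hRdef, sub_mul, sub_mul, one_mul, hPs, hQs]; abel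
  have hstR : star s * R = 0 := by rw [hRdef, mul_sub, mul_sub, mul_one, hstP, hstQ]; abel
  have hRst : R * star s = 0 := by rw [hRdef, sub_mul, sub_mul, one_mul, hPst, hQst]; abel
  have hPR : P * R = 0 := by rw [hRdef, mul_sub, mul_sub, mul_one, hPP, hPQ]; abel
  have hRP : R * P = 0 := by rw [hRdef, sub_mul, sub_mul, one_mul, hPP, hQP]; abel
  have hQR : Q * R = 0 := by rw [hRdef, mul_sub, mul_sub, mul_one, hQP, hQQ]; abel
  have hRQ : R * Q = 0 := by rw [hRdef, sub_mul, sub_mul, one_mul, hPQ, hQQ]; abel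
  have hRR : R * R = R := by
    have : R * R = R - R * P - R * Q := by rw [hRdef]; noncomm_ring
    rw [this, hRP, hRQ]; abel
  have hPQR1 : P + Q + R = 1 := by rw [hRdef]; abel
  -- ω
  set ω : ℂ := Complex.exp Complex.I with hωdef
  have hωne : ω ≠ 0 := Complex.exp_ne_zero _
  have hω1 : ω * (starRingEnd ℂ) ω = 1 := by
    rw [Complex.mul_conj]
    norm_cast
    rw [Complex.normSq_eq_norm_sq, Complex.norm_exp]
    simp
  have hωinv : (starRingEnd ℂ) ω = ω⁻¹ := by
    field_simp [hωne] at hω1 ⊢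
    linear_combination hω1
  -- U and V
  set U : A := s + star s + R with hUdef
  set V : A := ω • P + (starRingEnd ℂ) ω • Q + R with hVdef
  have hUsa : IsSelfAdjoint U := by
    simp only [hUdef, IsSelfAdjoint, star_add, star_star, hRsa.star_eq]
    abel
  have hUU : U * U = 1 := by
    have expand : U * U = s*s + s*star s + s*R + (star s*s + star s*star s + star s*R)
        + (R*s + R*star s + R*R) := by rw [hUdef]; noncomm_ring
    rw [expand, hss, hstst, hsR, hstR, hRs, hRst, hRR, ← hPdef, ← hQdef]
    rw [← hPQR1]; abel
  have hWstar : ∀ z₁ z₂ : ℂ, star (z₁ • P + z₂ • Q + R)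
      = (starRingEnd ℂ) z₁ • P + (starRingEnd ℂ) z₂ • Q + R := by
    intro z₁ z₂
    simp [star_add, star_smul, hPsa.star_eq, hQsa.star_eq, hRsa.star_eq, Complex.star_def]
  have hWmul : ∀ z₁ z₂ w₁ w₂ : ℂ, (z₁ • P + z₂ • Q + R) * (w₁ • P + w₂ • Q + R)
      = (z₁ * w₁) • P + (z₂ * w₂) • Q + R := by
    intro z₁ z₂ w₁ w₂
    simp only [add_mul, mul_add, smul_mul_smul_comm, smul_mul_assoc, mul_smul_comm,
      hPP, hQQ, hPQ, hQP, hPR, hRP, hQR, hRQ, hRR, smul_zero, add_zero, zero_add]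
    module
  have hcc : (starRingEnd ℂ) ((starRingEnd ℂ) ω) = ω := Complex.conj_conj ω
  have hVunit : V ∈ unitary A := by
    rw [Unitary.mem_iff]
    constructor
    · rw [hVdef, hWstar, hWmul, hcc, mul_comm ((starRingEnd ℂ) ω) ω, hω1]
      simpa using hPQR1
    · rw [hVdef, hWstar, hWmul, hcc, mul_comm ((starRingEnd ℂ) ω) ω, hω1]
      simpa using hPQR1
  have hUunit : U ∈ unitary A := by
    rw [Unitary.mem_iff, hUsa.star_eq]
    exact ⟨hUU, hUU⟩
  refine ⟨⟨U, hUunit⟩, ⟨V, hVunit⟩, ?_⟩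
  set u : unitary A := ⟨U, hUunit⟩ with hudef
  set v : unitary A := ⟨V, hVunit⟩ with hvdef
  set w : unitary A := u⁻¹ * v⁻¹ * u * v with hwdef
  have hUP : U * P = star s := by
    rw [hUdef, add_mul, add_mul, hsP, hstP, hRP]; abel
  have hUQ : U * Q = s := by rw [hUdef, add_mul, add_mul, hsQ, hstQ, hRQ]; abel
  have hUR : U * R = R := by rw [hUdef, add_mul, add_mul, hsR, hstR, hRR]; abel
  have hstU : star s * U = Q := by
    rw [hUdef, mul_add, mul_add, hstst, hstR, ← hQdef]; abel
  have hsU : s * U = P := by rw [hUdef, mul_add, mul_add, hss, hsR, ← hPdef]; abel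
  have hRU : R * U = R := by rw [hUdef, mul_add, mul_add, hRs, hRst, hRR]; abel
  set c0 : A := (ω * ω) • P + ((starRingEnd ℂ) ω * (starRingEnd ℂ) ω) • Q + R with hc0def
  have hwcoe : (w : A) = c0 := by
    have h1 : (w : A) = star U * star V * U * V := rfl
    have hsV : star V = (starRingEnd ℂ) ω • P + ω • Q + R := by rw [hVdef, hWstar, hcc]
    have h2 : U * star V = (starRingEnd ℂ) ω • star s + ω • s + R := by
      rw [hsV, mul_add, mul_add, mul_smul_comm, mul_smul_comm, hUP, hUQ, hUR]
    have h3 : U * star V * U = ω • P + (starRingEnd ℂ) ω • Q + R := by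
      rw [h2, add_mul, add_mul, smul_mul_assoc, smul_mul_assoc, hstU, hsU, hRU]
      module
    have h4 : U * star V * U * V = c0 := by rw [h3, hVdef, hWmul, hc0def]
    rw [h1, hUsa.star_eq, h4]
  have hpowN : ∀ n : ℕ, ((w ^ n : unitary A) : A)
      = (ω ^ (2 * n)) • P + (((starRingEnd ℂ) ω) ^ (2 * n)) • Q + R := by
    intro n
    induction n with
    | zero =>
      simp only [pow_zero, OneMemClass.coe_one, Nat.mul_zero, one_smul]
      exact hPQR1.symm
    | succ n ih =>
      rw [pow_succ]
      have hcoe2 : ((w ^ n * w : unitary A) : A) = ((w ^ n : unitary A) : A) * (w : A) := rfl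
      rw [hcoe2, ih, hwcoe, hc0def, hWmul,
        show ω ^ (2*n) * (ω * ω) = ω ^ (2*(n+1)) by ring,
        show ((starRingEnd ℂ) ω) ^ (2*n) * ((starRingEnd ℂ) ω * (starRingEnd ℂ) ω)
          = ((starRingEnd ℂ) ω) ^ (2*(n+1)) by ring]
  have hstar_pow : ∀ n : ℕ, star ((w ^ n : unitary A) : A)
      = (((starRingEnd ℂ) ω) ^ (2 * n)) • P + (ω ^ (2 * n)) • Q + R := by
    intro n
    rw [hpowN n, hWstar, map_pow, map_pow, hcc]
  have hωcne : (starRingEnd ℂ) ω ≠ 0 := by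
    simp [hωne]
  have hpowZ : ∀ k : ℤ, ((w ^ k : unitary A) : A)
      = (ω ^ (2 * k)) • P + (((starRingEnd ℂ) ω) ^ (2 * k)) • Q + R := by
    intro k
    cases k with
    | ofNat n =>
      rw [Int.ofNat_eq_coe, zpow_natCast, hpowN n,
        show (2 * (n:ℤ)) = ((2*n : ℕ) : ℤ) by push_cast; ring, zpow_natCast, zpow_natCast]
    | negSucc n =>
      rw [zpow_negSucc]
      have hcoeinv : (((w ^ (n+1))⁻¹ : unitary A) : A) = star ((w ^ (n+1) : unitary A) : A) := rfl
      have hneg : (2 * (Int.negSucc n)) = -(((2*(n+1)) : ℕ) : ℤ) := by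
        rw [Int.negSucc_eq]; push_cast; ring
      have e1 : (ω : ℂ) ^ (2 * (Int.negSucc n)) = ((starRingEnd ℂ) ω) ^ (2*(n+1)) := by
        rw [hneg, zpow_neg, zpow_natCast, hωinv, inv_pow]
      have e2 : ((starRingEnd ℂ) ω) ^ (2 * (Int.negSucc n)) = ω ^ (2*(n+1)) := by
        rw [hneg, zpow_neg, zpow_natCast, hωinv, inv_pow, inv_inv]
      rw [hcoeinv, hstar_pow (n+1), e1, e2]
  -- trace values
  have hτwk : ∀ k : ℤ, τ ((w ^ k : unitary A) : A)
      = ω ^ (2*k) * τ P + ((starRingEnd ℂ) ω) ^ (2*k) * τ Q + τ R := by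
    intro k
    rw [hpowZ k, map_add, map_add, map_smul, map_smul, smul_eq_mul, smul_eq_mul]
  set l : ℝ := (τ Q).re with hldef
  have hQim : (τ Q).im = 0 := by rw [hQdef]; exact (hpos s).2
  have hQre : 0 ≤ l := by rw [hldef, hQdef]; exact (hpos s).1
  have hτQ : τ Q = (l : ℂ) := by
    apply Complex.ext <;> simp [hldef, hQim]
  have hτP : τ P = (l : ℂ) := by
    rw [hPdef, hQdef] at *
    rw [htrace s (star s)]
    exact hτQ
  have hlpos : 0 < l := by
    rcases hQre.lt_or_eq with h | h
    · exact h
    · exfalso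
      apply hsne
      apply hfaithful
      rw [← hQdef, hτQ, ← h]
      norm_num
  have hRQR : star R * R = R := by rw [hRsa.star_eq, hRR]
  set r0 : ℝ := (τ R).re with hr0def
  have hRim : (τ R).im = 0 := by
    have h1 := (hpos R).2
    rwa [hRQR] at h1
  have hRre : 0 ≤ r0 := by
    have h1 := (hpos R).1
    rwa [hRQR] at h1
  have hτR : τ R = (r0 : ℂ) := by
    apply Complex.ext <;> simp [hr0def, hRim]
  have hsum : l + l + r0 = 1 := by
    have h1 : τ P + τ Q + τ R = 1 := by rw [← map_add, ← map_add, hPQR1, hτ1]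
    rw [hτP, hτQ, hτR] at h1
    exact_mod_cast h1
  -- final estimate
  intro k hk
  have hz : ((starRingEnd ℂ) ω) ^ (2*k) = (starRingEnd ℂ) (ω ^ (2*k)) :=
    (map_zpow₀ (starRingEnd ℂ) ω (2*k)).symm
  set m : ℝ := ((2 * k : ℤ) : ℝ) with hmdef
  have hzre : (ω ^ (2*k)).re = Real.cos m := by
    rw [hωdef, ← Complex.exp_int_mul]
    rw [show ((2*k : ℤ) : ℂ) * Complex.I = (m : ℂ) * Complex.I by rw [hmdef]; push_cast; ring]
    exact Complex.exp_ofReal_mul_I_re m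
  have hval : τ ((w ^ k : unitary A) : A) = ((2 * Real.cos m * l + r0 : ℝ) : ℂ) := by
    rw [hτwk k, hτP, hτQ, hτR, hz]
    have hadd : ω ^ (2*k) * (l:ℂ) + (starRingEnd ℂ) (ω ^ (2*k)) * (l:ℂ)
        = ((2 * (ω ^ (2*k)).re : ℝ) : ℂ) * (l:ℂ) := by
      rw [← add_mul, Complex.add_conj]
    rw [hadd, hzre]
    push_cast
    ring
  rw [hval, Complex.norm_real, Real.norm_eq_abs]
  -- cos m ≠ ±1
  have hm : m = 2 * (k : ℝ) := by rw [hmdef]; push_cast; ring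
  have hkne : (k : ℝ) ≠ 0 := Int.cast_ne_zero.mpr hk
  have hc1 : Real.cos m ≠ 1 := by
    intro hcos
    obtain ⟨n, hn⟩ := (Real.cos_eq_one_iff m).mp hcos
    have hn0 : (n : ℝ) ≠ 0 := by
      intro h0
      rw [h0, zero_mul] at hn
      rw [hm] at hn
      exact hkne (by linarith)
    apply irrational_pi
    refine ⟨(k : ℚ) / (n : ℚ), ?_⟩
    push_cast
    rw [div_eq_iff hn0]
    rw [hm] at hn
    linarith
  have hc2 : Real.cos m ≠ -1 := by
    intro hcos
    obtain ⟨n, hn⟩ := (Real.cos_eq_neg_one_iff).mp hcos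
    have hodd : ((1 + 2*n : ℤ) : ℝ) ≠ 0 := by
      intro h0
      have : (1 + 2*n : ℤ) = 0 := by exact_mod_cast h0
      omega
    apply irrational_pi
    refine ⟨(2 * k : ℚ) / ((1 + 2*n : ℤ) : ℚ), ?_⟩
    push_cast
    rw [div_eq_iff (by push_cast at hodd ⊢; exact hodd)]
    rw [hm] at hn
    linarith
  have hcle := Real.cos_le_one m
  have hcge := Real.neg_one_le_cos m
  have hclt : Real.cos m < 1 := lt_of_le_of_ne hcle hc1
  have hcgt : -1 < Real.cos m := lt_of_le_of_ne' hcge hc2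
  rw [abs_lt]
  constructor <;> nlinarith [hlpos, hRre, hsum, hclt, hcgt]

end
end

section
/- Let G be a group with subgroup H forming a Hecke pair with R(x) = [H : H ∩ x^{-1}Hx] satisfying R(x) = R(x^{-1}) for all x ∈ G. Then the vector state f ↦ ⟨λ(f)δ_H, δ_H⟩ on the Hecke algebra H(G,H) acting on ℓ²(H\G) is a tracial state: ⟨λ(f*g)δ_H, δ_H⟩ = ⟨λ(g*f)δ_H, δ_H⟩ for all f, g ∈ H(G,H). -/
noncomputable section
open scoped BigOperators Classical

variable {G : Type*} [Group G]

/-- `R(x) = [H : H ∩ x⁻¹Hx]` (with value `0` when the index is infinite). -/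
def heckeIndex (H : Subgroup G) (x : G) : ℕ :=
  (H.map (MulAut.conj x⁻¹).toMonoidHom).relIndex H

/-- The left action of `f` on functions on the right coset space `H\G`. -/
def heckeAct (H : Subgroup G) (f : G → ℂ)
    (ξ : Quotient (QuotientGroup.rightRel H) → ℂ) :
    Quotient (QuotientGroup.rightRel H) → ℂ :=
  fun c => ∑ᶠ d : Quotient (QuotientGroup.rightRel H),
    f (Quotient.out c * (Quotient.out d)⁻¹) * ξ d

/-- Convolution of Hecke algebra elements: `(f*g)(x) = Σ_{Hy ∈ H\G} f(xy⁻¹) g(y)`. -/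
def heckeConv (H : Subgroup G) (f g : G → ℂ) : G → ℂ :=
  fun x => ∑ᶠ d : Quotient (QuotientGroup.rightRel H),
    f (x * (Quotient.out d)⁻¹) * g (Quotient.out d)

/-- `δ_H ∈ ℓ²(H\G)`, the indicator of the coset `H`. -/
def deltaH (H : Subgroup G) : Quotient (QuotientGroup.rightRel H) → ℂ :=
  fun c => if c = Quotient.mk (QuotientGroup.rightRel H) (1 : G) then 1 else 0

namespace HeckeTraceAux

lemma mk_eq_mk {H : Subgroup G} {a b : G} :
    Quotient.mk (QuotientGroup.rightRel H) a = Quotient.mk (QuotientGroup.rightRel H) b ↔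
      b * a⁻¹ ∈ H := by
  rw [Quotient.eq]
  exact QuotientGroup.rightRel_apply

lemma mem_conjSub {H : Subgroup G} {x : G} (k : H) :
    k ∈ (H.map (MulAut.conj x⁻¹).toMonoidHom).subgroupOf H ↔ x * (k : G) * x⁻¹ ∈ H := by
  rw [Subgroup.mem_subgroupOf, Subgroup.mem_map]
  constructor
  · rintro ⟨y, hy, hyk⟩
    have : x * ((MulAut.conj x⁻¹).toMonoidHom y) * x⁻¹ = y := by
      simp only [MulEquiv.coe_toMonoidHom, MulAut.conj_apply]
      group
    rw [hyk] at this
    rwa [this]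
  · intro hk
    refine ⟨x * (k : G) * x⁻¹, hk, ?_⟩
    simp only [MulEquiv.coe_toMonoidHom, MulAut.conj_apply]
    group

lemma out_mk_mem_doset (H : Subgroup G) (x : G) (h : H) :
    Quotient.out (Quotient.mk (QuotientGroup.rightRel H) (x * (h : G))) ∈
      DoubleCoset.doubleCoset x (H : Set G) H := by
  set y := Quotient.out (Quotient.mk (QuotientGroup.rightRel H) (x * (h : G))) with hy
  have h1 : Quotient.mk (QuotientGroup.rightRel H) y =
      Quotient.mk (QuotientGroup.rightRel H) (x * (h : G)) := Quotient.out_eq _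
  rw [mk_eq_mk] at h1
  refine DoubleCoset.mem_doubleCoset.mpr ⟨(x * (h : G) * y⁻¹)⁻¹, H.inv_mem h1, h, h.2, ?_⟩
  group

/-- The map from `H/(H ∩ x⁻¹Hx)` (right cosets) onto the right cosets inside `HxH`. -/
def fiberMap (H : Subgroup G) (x : G) :
    Quotient (QuotientGroup.rightRel ((H.map (MulAut.conj x⁻¹).toMonoidHom).subgroupOf H)) →
    {d : Quotient (QuotientGroup.rightRel H) //
      Quotient.out d ∈ DoubleCoset.doubleCoset x (H : Set G) H} :=
  Quotient.lift
    (fun h : H =>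
      ⟨Quotient.mk (QuotientGroup.rightRel H) (x * (h : G)), out_mk_mem_doset H x h⟩)
    (by
      intro h₁ h₂ hrel
      have hm : h₂ * h₁⁻¹ ∈ (H.map (MulAut.conj x⁻¹).toMonoidHom).subgroupOf H :=
        QuotientGroup.rightRel_apply.mp hrel
      have hx : x * ((h₂ : G) * (h₁ : G)⁻¹) * x⁻¹ ∈ H := by
        simpa using (mem_conjSub (x := x) (h₂ * h₁⁻¹)).mp hm
      apply Subtype.ext
      dsimp only
      rw [mk_eq_mk]
      have : x * (h₂ : G) * (x * (h₁ : G))⁻¹ = x * ((h₂ : G) * (h₁ : G)⁻¹) * x⁻¹ := by group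
      rwa [this])

lemma fiberMap_bijective (H : Subgroup G) (x : G) : Function.Bijective (fiberMap H x) := by
  constructor
  · intro a b
    refine Quotient.inductionOn₂ a b ?_
    intro h₁ h₂ hab
    have h1 : Quotient.mk (QuotientGroup.rightRel H) (x * (h₁ : G)) =
        Quotient.mk (QuotientGroup.rightRel H) (x * (h₂ : G)) := congrArg Subtype.val hab
    rw [mk_eq_mk] at h1
    apply Quotient.sound
    refine QuotientGroup.rightRel_apply.mpr ?_
    rw [mem_conjSub]
    have : x * ((h₂ * h₁⁻¹ : H) : G) * x⁻¹ = x * (h₂ : G) * (x * (h₁ : G))⁻¹ := by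
      push_cast
      group
    rw [this]
    exact h1
  · rintro ⟨d, hd⟩
    obtain ⟨h₁, hh₁, h₂, hh₂, hout⟩ := DoubleCoset.mem_doubleCoset.mp hd
    refine ⟨Quotient.mk _ (⟨h₂, hh₂⟩ : H), ?_⟩
    apply Subtype.ext
    show Quotient.mk (QuotientGroup.rightRel H) (x * h₂) = d
    conv_rhs => rw [← Quotient.out_eq d]
    rw [mk_eq_mk, hout]
    have : h₁ * x * h₂ * (x * h₂)⁻¹ = h₁ := by group
    rw [this]
    exact hh₁

lemma card_fiber (H : Subgroup G) (x : G) :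
    Nat.card {d : Quotient (QuotientGroup.rightRel H) //
      Quotient.out d ∈ DoubleCoset.doubleCoset x (H : Set G) H} = heckeIndex H x := by
  rw [← Nat.card_congr (Equiv.ofBijective _ (fiberMap_bijective H x))]
  rw [Nat.card_congr (QuotientGroup.quotientRightRelEquivQuotientLeftRel
    ((H.map (MulAut.conj x⁻¹).toMonoidHom).subgroupOf H))]
  rfl

lemma mk_eq_iff_mem_doset {H : Subgroup G} {a x : G} :
    DoubleCoset.mk H H a = DoubleCoset.mk H H x ↔ a ∈ DoubleCoset.doubleCoset x (H : Set G) H := by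
  rw [DoubleCoset.eq, DoubleCoset.mem_doubleCoset]
  constructor
  · rintro ⟨h, hh, k, hk, hx⟩
    exact ⟨h⁻¹, H.inv_mem hh, k⁻¹, H.inv_mem hk, by rw [hx]; group⟩
  · rintro ⟨h, hh, k, hk, ha⟩
    exact ⟨h⁻¹, H.inv_mem hh, k⁻¹, H.inv_mem hk, by rw [ha]; group⟩

lemma inv_mem_doset_iff {H : Subgroup G} {x y : G} :
    y⁻¹ ∈ DoubleCoset.doubleCoset x (H : Set G) H ↔ y ∈ DoubleCoset.doubleCoset x⁻¹ (H : Set G) H := by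
  rw [DoubleCoset.mem_doubleCoset, DoubleCoset.mem_doubleCoset]
  constructor
  · rintro ⟨h, hh, k, hk, hy⟩
    refine ⟨k⁻¹, H.inv_mem hk, h⁻¹, H.inv_mem hh, ?_⟩
    rw [← inv_inv y, hy]; group
  · rintro ⟨h, hh, k, hk, hy⟩
    refine ⟨k⁻¹, H.inv_mem hk, h⁻¹, H.inv_mem hh, ?_⟩
    rw [hy]; group

lemma sum_inv (H : Subgroup G)
    (hsym : ∀ x : G, heckeIndex H x = heckeIndex H x⁻¹)
    (φ : G → ℂ) (hs : (Function.support φ).Finite)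
    (hbi : ∀ h ∈ H, ∀ h' ∈ H, ∀ x : G, φ (h * x * h') = φ x) :
    ∑ᶠ d : Quotient (QuotientGroup.rightRel H), φ (Quotient.out d) =
      ∑ᶠ d : Quotient (QuotientGroup.rightRel H), φ ((Quotient.out d)⁻¹) := by
  classical
  have hF : (Function.support fun d : Quotient (QuotientGroup.rightRel H) =>
      φ (Quotient.out d)).Finite :=
    Set.Finite.preimage (Quotient.out_injective.injOn) hs
  have hG : (Function.support fun d : Quotient (QuotientGroup.rightRel H) =>
      φ ((Quotient.out d)⁻¹)).Finite :=
    Set.Finite.preimage ((inv_injective.comp Quotient.out_injective).injOn) hs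
  rw [finsum_eq_sum _ hF, finsum_eq_sum _ hG]
  set A := hF.toFinset with hA
  set B := hG.toFinset with hB
  set π : Quotient (QuotientGroup.rightRel H) → DoubleCoset.Quotient (H : Set G) H :=
    fun d => DoubleCoset.mk H H (Quotient.out d) with hπ
  set π' : Quotient (QuotientGroup.rightRel H) → DoubleCoset.Quotient (H : Set G) H :=
    fun d => DoubleCoset.mk H H (Quotient.out d)⁻¹ with hπ'
  set E := A.image π ∪ B.image π' with hE
  rw [← Finset.sum_fiberwise_of_maps_to (g := π) (t := E)
      (fun d hd => Finset.mem_union_left _ (Finset.mem_image_of_mem _ hd)) _,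
    ← Finset.sum_fiberwise_of_maps_to (g := π') (t := E)
      (fun d hd => Finset.mem_union_right _ (Finset.mem_image_of_mem _ hd)) _]
  refine Finset.sum_congr rfl ?_
  intro e _
  set x := Quotient.out e with hxdef
  have hx : DoubleCoset.mk H H x = e := DoubleCoset.out_eq' H H e
  have hmemA : ∀ d, π d = e ↔ Quotient.out d ∈ DoubleCoset.doubleCoset x (H : Set G) H := by
    intro d; rw [← hx, hπ]; exact mk_eq_iff_mem_doset
  have hmemB : ∀ d, π' d = e ↔ (Quotient.out d)⁻¹ ∈ DoubleCoset.doubleCoset x (H : Set G) H := by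
    intro d; rw [← hx, hπ']; exact mk_eq_iff_mem_doset
  have hconst : ∀ y ∈ DoubleCoset.doubleCoset x (H : Set G) H, φ y = φ x := by
    intro y hy
    obtain ⟨a, ha, b, hb, rfl⟩ := DoubleCoset.mem_doubleCoset.mp hy
    exact hbi a ha b hb x
  by_cases hxz : φ x = 0
  · rw [Finset.sum_eq_zero, Finset.sum_eq_zero]
    · intro d hd
      rw [Finset.mem_filter] at hd
      rw [hconst _ ((hmemB d).mp hd.2), hxz]
    · intro d hd
      rw [Finset.mem_filter] at hd
      rw [hconst _ ((hmemA d).mp hd.2), hxz]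
  · have cA : ∀ d ∈ A.filter (fun d => π d = e), φ (Quotient.out d) = φ x := by
      intro d hd
      rw [Finset.mem_filter] at hd
      exact hconst _ ((hmemA d).mp hd.2)
    have cB : ∀ d ∈ B.filter (fun d => π' d = e), φ ((Quotient.out d)⁻¹) = φ x := by
      intro d hd
      rw [Finset.mem_filter] at hd
      exact hconst _ ((hmemB d).mp hd.2)
    rw [Finset.sum_congr rfl cA, Finset.sum_congr rfl cB, Finset.sum_const, Finset.sum_const]
    have hAset : ∀ d, d ∈ A.filter (fun d => π d = e) ↔
        Quotient.out d ∈ DoubleCoset.doubleCoset x (H : Set G) H := by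
      intro d
      rw [Finset.mem_filter]
      constructor
      · exact fun h => (hmemA d).mp h.2
      · intro h
        refine ⟨?_, (hmemA d).mpr h⟩
        rw [hA, Set.Finite.mem_toFinset, Function.mem_support]
        rw [hconst _ h]; exact hxz
    have hBset : ∀ d, d ∈ B.filter (fun d => π' d = e) ↔
        Quotient.out d ∈ DoubleCoset.doubleCoset x⁻¹ (H : Set G) H := by
      intro d
      rw [Finset.mem_filter, ← inv_mem_doset_iff]
      constructor
      · exact fun h => (hmemB d).mp h.2
      · intro h
        refine ⟨?_, (hmemB d).mpr h⟩
        rw [hB, Set.Finite.mem_toFinset, Function.mem_support]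
        rw [hconst _ h]; exact hxz
    have cardA : (A.filter (fun d => π d = e)).card = heckeIndex H x := by
      rw [← card_fiber H x, ← Set.ncard_coe_finset, ← Nat.card_coe_set_eq]
      exact Nat.card_congr (Equiv.subtypeEquivRight (fun d => by
        rw [Finset.mem_coe]; exact hAset d))
    have cardB : (B.filter (fun d => π' d = e)).card = heckeIndex H x⁻¹ := by
      rw [← card_fiber H x⁻¹, ← Set.ncard_coe_finset, ← Nat.card_coe_set_eq]
      exact Nat.card_congr (Equiv.subtypeEquivRight (fun d => by
        rw [Finset.mem_coe]; exact hBset d))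
    rw [cardA, cardB, hsym x]

end HeckeTraceAux

/-- If `R(x) = R(x⁻¹)` for all `x` (and all are finite), then the
vector state at `δ_H` is tracial on the Hecke algebra:
`⟨λ(f*g)δ_H, δ_H⟩ = ⟨λ(g*f)δ_H, δ_H⟩`. -/
theorem hecke_vector_state_tracial
    (H : Subgroup G)
    (hfin : ∀ x : G, heckeIndex H x ≠ 0)
    (hsym : ∀ x : G, heckeIndex H x = heckeIndex H x⁻¹)
    (f g : G → ℂ)
    (hfsupp : (Function.support f).Finite) (hgsupp : (Function.support g).Finite)
    (hfbi : ∀ h ∈ H, ∀ h' ∈ H, ∀ x : G, f (h * x * h') = f x)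
    (hgbi : ∀ h ∈ H, ∀ h' ∈ H, ∀ x : G, g (h * x * h') = g x) :
    heckeAct H (heckeConv H f g) (deltaH H)
        (Quotient.mk (QuotientGroup.rightRel H) (1 : G)) =
      heckeAct H (heckeConv H g f) (deltaH H)
        (Quotient.mk (QuotientGroup.rightRel H) (1 : G)) := by
  have hδ : ∀ F : G → ℂ,
      heckeAct H F (deltaH H) (Quotient.mk (QuotientGroup.rightRel H) (1 : G)) = F 1 := by
    intro F
    rw [heckeAct, finsum_eq_single _ (Quotient.mk (QuotientGroup.rightRel H) (1 : G))
      (fun d hd => by rw [deltaH]; simp [hd])]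
    rw [deltaH]
    simp
  rw [hδ, hδ]
  set φ : G → ℂ := fun y => f y⁻¹ * g y with hφ
  have hsupp : (Function.support φ).Finite := by
    refine hgsupp.subset ?_
    intro y hy
    rw [Function.mem_support] at hy ⊢
    intro hgy
    exact hy (by rw [hφ]; dsimp only; rw [hgy, mul_zero])
  have hbiφ : ∀ h ∈ H, ∀ h' ∈ H, ∀ y : G, φ (h * y * h') = φ y := by
    intro h hh h' hh' y
    rw [hφ]; dsimp only
    have e1 : (h * y * h')⁻¹ = h'⁻¹ * y⁻¹ * h⁻¹ := by group
    rw [e1, hfbi h'⁻¹ (H.inv_mem hh') h⁻¹ (H.inv_mem hh) y⁻¹, hgbi h hh h' hh' y]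
  have key := HeckeTraceAux.sum_inv H hsym φ hsupp hbiφ
  calc heckeConv H f g 1
      = ∑ᶠ d : Quotient (QuotientGroup.rightRel H), φ (Quotient.out d) := by
        rw [heckeConv]
        exact finsum_congr (fun d => by rw [one_mul, hφ])
    _ = ∑ᶠ d : Quotient (QuotientGroup.rightRel H), φ ((Quotient.out d)⁻¹) := key
    _ = heckeConv H g f 1 := by
        rw [heckeConv]
        exact finsum_congr (fun d => by rw [one_mul, hφ]; dsimp only; rw [inv_inv, mul_comm])

end
end

section
/- For d ≥ 2 and l ≥ 3, the Hecke algebra H(S_{d^l}, Q_l) is non-commutative, where Q_l ≤ S_{d^l} is the image of Aut(T_{d,d}) acting on the d^l vertices at level l of the rooted d-regular tree T_{d,d} (i.e., Q_l is the iterated wreath product S_d ≀ S_d ≀ ... ≀ S_d, l times, in its imprimitive action on d^l points). Equivalently, (S_{d^l}, Q_l) is not a Gelfand pair. -/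
noncomputable section
open scoped Classical

/-- The leaves of the depth-`l` rooted `d`-ary tree: there are `d^l` of them. -/
abbrev Leaves (d l : ℕ) : Type := Fin l → Fin d

/-- The automorphism group `Q_l` of the depth-`l` rooted `d`-ary tree in its action on
the `d^l` leaves (the iterated wreath product `S_d ≀ ⋯ ≀ S_d`): those permutations of
the leaves which preserve agreement of prefixes at every level. -/
def treeAutFinset (d l : ℕ) : Finset (Equiv.Perm (Leaves d l)) :=
  Finset.univ.filter fun σ =>
    ∀ m ≤ l, ∀ x y : Leaves d l,
      (∀ i : Fin l, (i : ℕ) < m → x i = y i) ↔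
        (∀ i : Fin l, (i : ℕ) < m → σ x i = σ y i)

/-- The averaging idempotent `p_{Q_l}` in the group algebra `ℂ[S_{d^l}]`. -/
def pQ (d l : ℕ) : MonoidAlgebra ℂ (Equiv.Perm (Leaves d l)) :=
  ((treeAutFinset d l).card : ℂ)⁻¹ •
    ∑ σ ∈ treeAutFinset d l, MonoidAlgebra.single σ 1

namespace Stmt19

variable (d l : ℕ)

/-! ### Combinatorial witnesses -/

def z0 (hd : 2 ≤ d) : Fin d := ⟨0, by omega⟩
def z1 (hd : 2 ≤ d) : Fin d := ⟨1, by omega⟩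

variable (hd : 2 ≤ d)

/-- The leaf `0…0`. -/
def AA : Leaves d l := fun _ => z0 d hd
/-- The leaf `010…0`. -/
def BB : Leaves d l := fun i => if (i : ℕ) = 1 then z1 d hd else z0 d hd

/-- The transposition of the leaves `0…0` and `010…0` (they split at level 1). -/
def xp : Equiv.Perm (Leaves d l) := Equiv.swap (AA d l hd) (BB d l hd)

/-- Membership in the union of the two depth-`l-1` blocks `0…0*` and `10…0*`
(up to relabeling of the top coordinate). -/
def condM (w : Leaves d l) : Prop :=
  ∀ i : Fin l, 0 < (i : ℕ) → (i : ℕ) < l - 1 → w i = z0 d hd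

/-- The involution swapping the depth-`l-1` block `0…0*` with the block `10…0*`,
preserving the last coordinate. -/
def Tmap (w : Leaves d l) : Leaves d l :=
  fun i => if (i : ℕ) = 0 ∧ condM d l hd w then Equiv.swap (z0 d hd) (z1 d hd) (w i) else w i

lemma Tmap_apply_pos (w : Leaves d l) (i : Fin l) (h : (i : ℕ) ≠ 0) :
    Tmap d l hd w i = w i := by simp [Tmap, h]

lemma condM_Tmap (w : Leaves d l) : condM d l hd (Tmap d l hd w) ↔ condM d l hd w := by
  constructor <;> intro h i h1 h2
  · have := h i h1 h2
    rwa [Tmap_apply_pos d l hd w i (by omega)] at this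
  · rw [Tmap_apply_pos d l hd w i (by omega)]
    exact h i h1 h2

lemma Tmap_invol : Function.Involutive (Tmap d l hd) := by
  intro w
  funext i
  by_cases h0 : (i : ℕ) = 0
  · by_cases hc : condM d l hd w
    · have hc' : condM d l hd (Tmap d l hd w) := (condM_Tmap d l hd w).mpr hc
      show (if (i : ℕ) = 0 ∧ condM d l hd (Tmap d l hd w) then
          Equiv.swap (z0 d hd) (z1 d hd) (Tmap d l hd w i) else Tmap d l hd w i) = w i
      rw [if_pos ⟨h0, hc'⟩]
      show Equiv.swap (z0 d hd) (z1 d hd)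
          ((if (i : ℕ) = 0 ∧ condM d l hd w then
            Equiv.swap (z0 d hd) (z1 d hd) (w i) else w i)) = w i
      rw [if_pos ⟨h0, hc⟩, Equiv.swap_apply_self]
    · have hc' : ¬ condM d l hd (Tmap d l hd w) := fun h => hc ((condM_Tmap d l hd w).mp h)
      show (if (i : ℕ) = 0 ∧ condM d l hd (Tmap d l hd w) then
          Equiv.swap (z0 d hd) (z1 d hd) (Tmap d l hd w i) else Tmap d l hd w i) = w i
      rw [if_neg (fun hh => hc' hh.2)]
      show (if (i : ℕ) = 0 ∧ condM d l hd w then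
          Equiv.swap (z0 d hd) (z1 d hd) (w i) else w i) = w i
      rw [if_neg (fun hh => hc hh.2)]
  · rw [Tmap_apply_pos d l hd _ i h0, Tmap_apply_pos d l hd _ i h0]

/-- The block swap as a permutation. -/
def yp : Equiv.Perm (Leaves d l) := Function.Involutive.toPerm _ (Tmap_invol d l hd)

lemma yp_apply (w : Leaves d l) : yp d l hd w = Tmap d l hd w := rfl

lemma z0_ne_z1 : z0 d hd ≠ z1 d hd := by simp [z0, z1]

/-- The leaf `0…01`. -/
def a2 : Leaves d l := fun i => if (i : ℕ) = l - 1 then z1 d hd else z0 d hd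
/-- The leaf `10…01`. -/
def c2 : Leaves d l := fun i => if (i : ℕ) = 0 ∨ (i : ℕ) = l - 1 then z1 d hd else z0 d hd

lemma one_mem : (1 : Equiv.Perm (Leaves d l)) ∈ treeAutFinset d l := by
  simp [treeAutFinset]

lemma pres {σ : Equiv.Perm (Leaves d l)} (hσ : σ ∈ treeAutFinset d l) {m : ℕ} (hm : m ≤ l)
    {w w' : Leaves d l} (h : ∀ i : Fin l, (i : ℕ) < m → w i = w' i) :
    ∀ i : Fin l, (i : ℕ) < m → σ w i = σ w' i := by
  simp only [treeAutFinset, Finset.mem_filter, Finset.mem_univ, true_and] at hσ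
  exact (hσ m hm w w').mp h

lemma BB_at0 (i : Fin l) (hi : (i : ℕ) ≠ 1) : BB d l hd i = z0 d hd := by
  simp [BB, hi]

lemma x_coord0 (w : Leaves d l) (i : Fin l) (hi : (i : ℕ) < 1) :
    xp d l hd w i = w i := by
  unfold xp
  rcases eq_or_ne w (AA d l hd) with h | h
  · rw [h, Equiv.swap_apply_left, BB_at0 d l hd i (by omega)]
    rfl
  · rcases eq_or_ne w (BB d l hd) with h2 | h2
    · rw [h2, Equiv.swap_apply_right, BB_at0 d l hd i (by omega)]
      rfl
    · rw [Equiv.swap_apply_of_ne_of_ne h h2]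

lemma y_pres (w w' : Leaves d l) (h : ∀ i : Fin l, (i : ℕ) < l - 1 → w i = w' i) :
    ∀ i : Fin l, (i : ℕ) < l - 1 → yp d l hd w i = yp d l hd w' i := by
  have hcc : condM d l hd w ↔ condM d l hd w' := by
    constructor <;> intro hc i h1 h2
    · rw [← h i h2]; exact hc i h1 h2
    · rw [h i h2]; exact hc i h1 h2
  intro i hi
  rw [yp_apply, yp_apply]
  unfold Tmap
  by_cases h0 : (i : ℕ) = 0
  · by_cases hc : condM d l hd w
    · rw [if_pos ⟨h0, hc⟩, if_pos ⟨h0, hcc.mp hc⟩, h i hi]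
    · rw [if_neg (fun hh => hc hh.2), if_neg (fun hh => (hc (hcc.mpr hh.2))), h i hi]
  · rw [if_neg (fun hh => h0 hh.1), if_neg (fun hh => h0 hh.1), h i hi]

lemma wx1 : xp d l hd (AA d l hd) = BB d l hd := Equiv.swap_apply_left _ _

lemma wy1 (hl : 3 ≤ l) : yp d l hd (BB d l hd) = BB d l hd := by
  have hc : ¬ condM d l hd (BB d l hd) := by
    intro hc
    have h1 := hc ⟨1, by omega⟩ (by norm_num) (by simpa using (by omega : 1 < l - 1))
    rw [show BB d l hd ⟨1, by omega⟩ = z1 d hd by simp [BB]] at h1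
    exact z0_ne_z1 d hd h1.symm
  funext i
  rw [yp_apply]
  unfold Tmap
  rw [if_neg (fun hh => hc hh.2)]

lemma a2_ne_AA (hl : 3 ≤ l) : a2 d l hd ≠ AA d l hd := by
  intro h
  have := congrFun h ⟨l - 1, by omega⟩
  rw [show a2 d l hd ⟨l - 1, by omega⟩ = z1 d hd by simp [a2]] at this
  exact z0_ne_z1 d hd this.symm

lemma a2_ne_BB (hl : 3 ≤ l) : a2 d l hd ≠ BB d l hd := by
  intro h
  have := congrFun h ⟨1, by omega⟩
  rw [show a2 d l hd ⟨1, by omega⟩ = z0 d hd by simp [a2]; omega] at this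
  rw [show BB d l hd ⟨1, by omega⟩ = z1 d hd by simp [BB]] at this
  exact z0_ne_z1 d hd this

lemma wx2 (hl : 3 ≤ l) : xp d l hd (a2 d l hd) = a2 d l hd :=
  Equiv.swap_apply_of_ne_of_ne (a2_ne_AA d l hd hl) (a2_ne_BB d l hd hl)

lemma wy2 (hl : 3 ≤ l) : yp d l hd (a2 d l hd) = c2 d l hd := by
  have hc : condM d l hd (a2 d l hd) := by
    intro i h1 h2
    simp only [a2]
    rw [if_neg (by omega)]
  funext i
  rw [yp_apply]
  unfold Tmap
  by_cases h0 : (i : ℕ) = 0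
  · rw [if_pos ⟨h0, hc⟩]
    have ha : a2 d l hd i = z0 d hd := by
      simp only [a2]; rw [if_neg (by omega)]
    rw [ha, Equiv.swap_apply_left]
    simp only [c2]
    rw [if_pos (Or.inl h0)]
  · rw [if_neg (fun hh => h0 hh.1)]
    simp only [a2, c2]
    by_cases hL : (i : ℕ) = l - 1
    · rw [if_pos hL, if_pos (Or.inr hL)]
    · rw [if_neg hL, if_neg (by tauto)]

/-- The key vanishing: no element of `Q x Q Q y Q` maps the pair
`(0…0, 0…01)` (split level `l-1`) to the pair `(010…0, 10…01)` (split level `0`). -/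
lemma zero_side (hl : 3 ≤ l) (q1 q2 q3 q4 : Equiv.Perm (Leaves d l))
    (h1 : q1 ∈ treeAutFinset d l) (h2 : q2 ∈ treeAutFinset d l)
    (h3 : q3 ∈ treeAutFinset d l) (h4 : q4 ∈ treeAutFinset d l) :
    ¬ (q1 (xp d l hd (q2 (q3 (yp d l hd (q4 (AA d l hd)))))) = BB d l hd ∧
       q1 (xp d l hd (q2 (q3 (yp d l hd (q4 (a2 d l hd)))))) = c2 d l hd) := by
  rintro ⟨H1, H2⟩
  have s0 : ∀ i : Fin l, (i : ℕ) < l - 1 → AA d l hd i = a2 d l hd i := by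
    intro i hi
    simp only [AA, a2]
    rw [if_neg (by omega)]
  have s1 := pres d l h4 (by omega : l - 1 ≤ l) s0
  have s2 := y_pres d l hd _ _ s1
  have s3 := pres d l h3 (by omega : l - 1 ≤ l) s2
  have s4 := pres d l h2 (by omega : l - 1 ≤ l) s3
  have t1 : ∀ i : Fin l, (i : ℕ) < 1 →
      xp d l hd (q2 (q3 (yp d l hd (q4 (AA d l hd))))) i =
      xp d l hd (q2 (q3 (yp d l hd (q4 (a2 d l hd))))) i := by
    intro i hi
    rw [x_coord0 d l hd _ i hi, x_coord0 d l hd _ i hi]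
    exact s4 i (by omega)
  have t2 := pres d l h1 (by omega : 1 ≤ l) t1
  have t3 := t2 ⟨0, by omega⟩ (by norm_num)
  rw [H1, H2] at t3
  rw [BB_at0 d l hd ⟨0, by omega⟩ (by norm_num)] at t3
  rw [show c2 d l hd ⟨0, by omega⟩ = z1 d hd by simp [c2]] at t3
  exact z0_ne_z1 d hd t3

/-! ### Algebraic layer -/

variable (e : Equiv.Perm (Leaves d l) → ℂ)

/-- Matrix-coefficient functional on the group algebra. -/
def Phi : MonoidAlgebra ℂ (Equiv.Perm (Leaves d l)) →ₗ[ℂ] ℂ :=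
  (Finsupp.linearCombination ℂ e).comp (MonoidAlgebra.coeffLinearEquiv ℂ).toLinearMap

lemma Phi_single (g : Equiv.Perm (Leaves d l)) (v : ℂ) :
    Phi d l e (MonoidAlgebra.single g v) = v * e g := by
  show Finsupp.linearCombination ℂ e (Finsupp.single g v) = v * e g
  rw [Finsupp.linearCombination_single, smul_eq_mul]

lemma tri (z : Equiv.Perm (Leaves d l)) :
    pQ d l * MonoidAlgebra.single z 1 * pQ d l =
      (((treeAutFinset d l).card : ℂ)⁻¹ ^ 2) •
        ∑ q1 ∈ treeAutFinset d l, ∑ q2 ∈ treeAutFinset d l,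
          MonoidAlgebra.single (q1 * z * q2) 1 := by
  unfold pQ
  rw [smul_mul_assoc, smul_mul_assoc, mul_smul_comm, smul_smul, ← pow_two]
  congr 1
  rw [Finset.sum_mul]
  have h1 : ∀ q1 ∈ treeAutFinset d l,
      MonoidAlgebra.single (R := ℂ) q1 1 * MonoidAlgebra.single z 1 =
        MonoidAlgebra.single (q1 * z) 1 := by
    intro q1 _
    rw [MonoidAlgebra.single_mul_single, one_mul]
  rw [Finset.sum_congr rfl h1, Finset.sum_mul_sum]
  refine Finset.sum_congr rfl fun q1 _ => Finset.sum_congr rfl fun q2 _ => ?_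
  rw [MonoidAlgebra.single_mul_single, one_mul]

lemma expand (z w : Equiv.Perm (Leaves d l)) :
    (pQ d l * MonoidAlgebra.single z 1 * pQ d l) *
      (pQ d l * MonoidAlgebra.single w 1 * pQ d l) =
      (((treeAutFinset d l).card : ℂ)⁻¹ ^ 4) •
        ∑ q1 ∈ treeAutFinset d l, ∑ q3 ∈ treeAutFinset d l,
          ∑ q2 ∈ treeAutFinset d l, ∑ q4 ∈ treeAutFinset d l,
            MonoidAlgebra.single ((q1 * z * q2) * (q3 * w * q4)) 1 := by
  rw [tri d l z, tri d l w, smul_mul_assoc, mul_smul_comm, smul_smul,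
    show (((treeAutFinset d l).card : ℂ)⁻¹ ^ 2 * ((treeAutFinset d l).card : ℂ)⁻¹ ^ 2) =
      ((treeAutFinset d l).card : ℂ)⁻¹ ^ 4 from by ring]
  congr 1
  rw [Finset.sum_mul_sum]
  refine Finset.sum_congr rfl fun q1 _ => Finset.sum_congr rfl fun q3 _ => ?_
  rw [Finset.sum_mul_sum]
  refine Finset.sum_congr rfl fun q2 _ => Finset.sum_congr rfl fun q4 _ => ?_
  rw [MonoidAlgebra.single_mul_single, one_mul]

lemma Phi_expand (z w : Equiv.Perm (Leaves d l)) :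
    Phi d l e ((pQ d l * MonoidAlgebra.single z 1 * pQ d l) *
      (pQ d l * MonoidAlgebra.single w 1 * pQ d l)) =
      (((treeAutFinset d l).card : ℂ)⁻¹ ^ 4) *
        ∑ q1 ∈ treeAutFinset d l, ∑ q3 ∈ treeAutFinset d l,
          ∑ q2 ∈ treeAutFinset d l, ∑ q4 ∈ treeAutFinset d l,
            e ((q1 * z * q2) * (q3 * w * q4)) := by
  rw [expand, map_smul, smul_eq_mul]
  congr 1
  rw [map_sum]
  refine Finset.sum_congr rfl fun q1 _ => ?_
  rw [map_sum]
  refine Finset.sum_congr rfl fun q3 _ => ?_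
  rw [map_sum]
  refine Finset.sum_congr rfl fun q2 _ => ?_
  rw [map_sum]
  refine Finset.sum_congr rfl fun q4 _ => ?_
  rw [Phi_single, one_mul]

end Stmt19

/-- For `d ≥ 2` and `l ≥ 3` the Hecke algebra
`H(S_{d^l}, Q_l) = p_{Q_l} ℂ[S_{d^l}] p_{Q_l}` is non-commutative; equivalently,
`(S_{d^l}, Q_l)` is not a Gelfand pair. -/
theorem hecke_algebra_noncommutative
    (d l : ℕ) (hd : 2 ≤ d) (hl : 3 ≤ l) :
    ∃ a b : MonoidAlgebra ℂ (Equiv.Perm (Leaves d l)),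
      (pQ d l * a * pQ d l) * (pQ d l * b * pQ d l) ≠
        (pQ d l * b * pQ d l) * (pQ d l * a * pQ d l) := by
  classical
  set G := Equiv.Perm (Leaves d l)
  set Qf := treeAutFinset d l with hQf
  -- the counting function on pairs of leaves
  set NN : G → ℕ := fun g =>
    if g (Stmt19.AA d l hd) = Stmt19.BB d l hd ∧
       g (Stmt19.a2 d l hd) = Stmt19.c2 d l hd then 1 else 0 with hNN
  set e : G → ℂ := fun g => (NN g : ℂ) with he
  refine ⟨MonoidAlgebra.single (Stmt19.xp d l hd) 1,
          MonoidAlgebra.single (Stmt19.yp d l hd) 1, ?_⟩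
  intro hEq
  have hΦ := congrArg (Stmt19.Phi d l e) hEq
  rw [Stmt19.Phi_expand, Stmt19.Phi_expand] at hΦ
  -- the (x, y) side vanishes
  have hL : ∑ q1 ∈ Qf, ∑ q3 ∈ Qf, ∑ q2 ∈ Qf, ∑ q4 ∈ Qf,
      e ((q1 * Stmt19.xp d l hd * q2) * (q3 * Stmt19.yp d l hd * q4)) = 0 := by
    refine Finset.sum_eq_zero fun q1 hq1 => Finset.sum_eq_zero fun q3 hq3 =>
      Finset.sum_eq_zero fun q2 hq2 => Finset.sum_eq_zero fun q4 hq4 => ?_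
    have hz := Stmt19.zero_side d l hd hl q1 q2 q3 q4 hq1 hq2 hq3 hq4
    simp only [he, hNN]
    rw [if_neg]
    · norm_num
    · exact hz
  -- the (y, x) side does not vanish
  have hone : (1 : G) ∈ Qf := Stmt19.one_mem d l
  have hwit : NN ((1 * Stmt19.yp d l hd * 1) * ((1 : G) * Stmt19.xp d l hd * 1)) = 1 := by
    have hyx : ((1 * Stmt19.yp d l hd * 1) * ((1 : G) * Stmt19.xp d l hd * 1)) =
        Stmt19.yp d l hd * Stmt19.xp d l hd := by
      simp [one_mul, mul_one]
    simp only [hNN, hyx]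
    rw [if_pos]
    constructor
    · rw [Equiv.Perm.mul_apply, Stmt19.wx1, Stmt19.wy1 d l hd hl]
    · rw [Equiv.Perm.mul_apply, Stmt19.wx2 d l hd hl, Stmt19.wy2 d l hd hl]
  have hpos : 0 < ∑ q1 ∈ Qf, ∑ q3 ∈ Qf, ∑ q2 ∈ Qf, ∑ q4 ∈ Qf,
      NN ((q1 * Stmt19.yp d l hd * q2) * (q3 * Stmt19.xp d l hd * q4)) := by
    have b4 : NN ((1 * Stmt19.yp d l hd * 1) * ((1 : G) * Stmt19.xp d l hd * 1)) ≤
        ∑ q4 ∈ Qf, NN ((1 * Stmt19.yp d l hd * 1) * ((1 : G) * Stmt19.xp d l hd * q4)) :=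
      Finset.single_le_sum
        (f := fun q4 => NN ((1 * Stmt19.yp d l hd * 1) * ((1:G) * Stmt19.xp d l hd * q4)))
        (fun i _ => Nat.zero_le _) hone
    have b2 : (∑ q4 ∈ Qf, NN ((1 * Stmt19.yp d l hd * 1) * ((1:G) * Stmt19.xp d l hd * q4))) ≤
        ∑ q2 ∈ Qf, ∑ q4 ∈ Qf,
          NN ((1 * Stmt19.yp d l hd * q2) * ((1:G) * Stmt19.xp d l hd * q4)) :=
      Finset.single_le_sum
        (f := fun q2 => ∑ q4 ∈ Qf, NN ((1 * Stmt19.yp d l hd * q2) * ((1:G) * Stmt19.xp d l hd * q4)))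
        (fun i _ => Nat.zero_le _) hone
    have b3 : (∑ q2 ∈ Qf, ∑ q4 ∈ Qf,
          NN ((1 * Stmt19.yp d l hd * q2) * ((1:G) * Stmt19.xp d l hd * q4))) ≤
        ∑ q3 ∈ Qf, ∑ q2 ∈ Qf, ∑ q4 ∈ Qf,
          NN ((1 * Stmt19.yp d l hd * q2) * (q3 * Stmt19.xp d l hd * q4)) :=
      Finset.single_le_sum
        (f := fun q3 => ∑ q2 ∈ Qf, ∑ q4 ∈ Qf,
          NN ((1 * Stmt19.yp d l hd * q2) * (q3 * Stmt19.xp d l hd * q4)))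
        (fun i _ => Nat.zero_le _) hone
    have b1 : (∑ q3 ∈ Qf, ∑ q2 ∈ Qf, ∑ q4 ∈ Qf,
          NN ((1 * Stmt19.yp d l hd * q2) * (q3 * Stmt19.xp d l hd * q4))) ≤
        ∑ q1 ∈ Qf, ∑ q3 ∈ Qf, ∑ q2 ∈ Qf, ∑ q4 ∈ Qf,
          NN ((q1 * Stmt19.yp d l hd * q2) * (q3 * Stmt19.xp d l hd * q4)) :=
      Finset.single_le_sum
        (f := fun q1 => ∑ q3 ∈ Qf, ∑ q2 ∈ Qf, ∑ q4 ∈ Qf,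
          NN ((q1 * Stmt19.yp d l hd * q2) * (q3 * Stmt19.xp d l hd * q4)))
        (fun i _ => Nat.zero_le _) hone
    calc 0 < 1 := Nat.one_pos
    _ = NN ((1 * Stmt19.yp d l hd * 1) * ((1 : G) * Stmt19.xp d l hd * 1)) := hwit.symm
    _ ≤ _ := le_trans b4 (le_trans b2 (le_trans b3 b1))
  have hR : ∑ q1 ∈ Qf, ∑ q3 ∈ Qf, ∑ q2 ∈ Qf, ∑ q4 ∈ Qf,
      e ((q1 * Stmt19.yp d l hd * q2) * (q3 * Stmt19.xp d l hd * q4)) =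
      ((∑ q1 ∈ Qf, ∑ q3 ∈ Qf, ∑ q2 ∈ Qf, ∑ q4 ∈ Qf,
        NN ((q1 * Stmt19.yp d l hd * q2) * (q3 * Stmt19.xp d l hd * q4)) : ℕ) : ℂ) := by
    simp only [he, Nat.cast_sum]
  have hcard : (Qf.card : ℂ) ≠ 0 :=
    Nat.cast_ne_zero.mpr (Finset.card_pos.mpr ⟨1, hone⟩).ne'
  rw [hL, hR] at hΦ
  have : (((Qf.card : ℂ))⁻¹ ^ 4) *
      ((∑ q1 ∈ Qf, ∑ q3 ∈ Qf, ∑ q2 ∈ Qf, ∑ q4 ∈ Qf,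
        NN ((q1 * Stmt19.yp d l hd * q2) * (q3 * Stmt19.xp d l hd * q4)) : ℕ) : ℂ) ≠ 0 :=
    mul_ne_zero (pow_ne_zero _ (inv_ne_zero hcard)) (Nat.cast_ne_zero.mpr hpos.ne')
  rw [mul_zero] at hΦ
  exact this hΦ.symm

end
end
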